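/- arXiv:2108.01581 — 3 statements merged into one kernel-verified Lean document; each statement's English description precedes it below -/
import Mathlib

section
/- Let X be a metric space, k > 0, and let E ⊆ X be a k-Ahlfors–David regular set with constant C_E. Suppose G ⊆ E satisfies diam G = D < ∞. Then for any A ≥ 1 there exists a set G̃ ⊆ E such that (i) G ⊆ G̃ ⊆ {x ∈ E : dist(x, G) < 3D/A}, and (ii) G̃ is k-Ahlfors–David regular with a constant depending only on k, C_E, and A. -/
open Metric MeasureTheory Set

variable {X : Type*} [MetricSpace X] [MeasurableSpace X] [BorelSpace X]

/-- `E` is a `k`-Ahlfors–David regular set with constant `C > 1`: `E` is closed, has more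
than one point, and `C⁻¹ r^k ≤ 𝓗^k(E ∩ B(x,r)) ≤ C r^k` for all `x ∈ E`, `0 < r < diam E`. -/
def ADR (k C : ℝ) (E : Set X) : Prop :=
  IsClosed E ∧ E.Nontrivial ∧ 1 < C ∧
    ∀ x ∈ E, ∀ r : ℝ, 0 < r → ENNReal.ofReal r < EMetric.diam E →
      ENNReal.ofReal (C⁻¹ * r ^ k) ≤ μH[k] (E ∩ ball x r) ∧
        μH[k] (E ∩ ball x r) ≤ ENNReal.ofReal (C * r ^ k)

/-- `F` has big pieces of the family `𝓕` with constant `θ`: for every `x ∈ F` and `R > 0`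
there is `G ∈ 𝓕` with `𝓗^k(B(x,R) ∩ F ∩ G) ≥ θ 𝓗^k(B(x,R) ∩ F)`. -/
def BigPieces (k θ : ℝ) (𝓕 : Set (Set X)) (F : Set X) : Prop :=
  ∀ x ∈ F, ∀ R : ℝ, 0 < R →
    ∃ G ∈ 𝓕, ENNReal.ofReal θ * μH[k] (ball x R ∩ F) ≤ μH[k] (ball x R ∩ F ∩ G)

/-- The iterative thickening of `G` inside `E` at scales `ρ n`. -/
def Tseq (E G : Set X) (ρ : ℕ → ℝ) : ℕ → Set X
  | 0 => G
  | n + 1 => Tseq E G ρ n ∪ (E ∩ {x | Metric.infDist x (Tseq E G ρ n) < ρ n})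

/-- **Lemma 2, parts (i)–(ii).** If `E` is `k`-Ahlfors–David regular and `G ⊆ E` has
finite diameter `D`, then for any `A ≥ 1` there is `G' ⊆ E` with
`G ⊆ G' ⊆ {x ∈ E : dist(x,G) < 3D/A}` and `G'` `k`-Ahlfors–David regular with constant
depending only on `k`, `C_E` and `A`. -/
theorem regular_extension (k C_E A : ℝ) (hk : 0 < k) (hA : 1 ≤ A) :
    ∃ C' : ℝ, 1 < C' ∧
      ∀ (X : Type*) [MetricSpace X] [MeasurableSpace X] [BorelSpace X]
        (E G : Set X),
        ADR k C_E E → G ⊆ E → G.Nontrivial → Bornology.IsBounded G →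
        ∃ G' : Set X, G ⊆ G' ∧
          G' ⊆ {x ∈ E | Metric.infDist x G < 3 * Metric.diam G / A} ∧
          ADR k C' G' := by
  have hA0 : (0:ℝ) < A := lt_of_lt_of_le one_pos hA
  have h8A : (1:ℝ) < 8 * A := by nlinarith
  have h8Ak : (1:ℝ) ≤ (8 * A) ^ k := by
    rw [show (1:ℝ) = 1 ^ k by rw [Real.one_rpow]]
    exact Real.rpow_le_rpow zero_le_one h8A.le hk.le
  refine ⟨max C_E 2 * (8 * A) ^ k, ?_, ?_⟩
  · calc (1:ℝ) < 2 := one_lt_two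
      _ = 2 * 1 := (mul_one 2).symm
      _ ≤ max C_E 2 * (8 * A) ^ k :=
        mul_le_mul (le_max_right _ _) h8Ak zero_le_one
          (le_trans zero_le_two (le_max_right _ _))
  intro X _ _ _ E G hE hGE hGnt hGb
  set C' : ℝ := max C_E 2 * (8 * A) ^ k with hC'def
  obtain ⟨hEcl, hEnt, hCE, hADR⟩ := hE
  have hCE0 : (0:ℝ) < C_E := lt_trans one_pos hCE
  -- basic quantities
  set D := Metric.diam G with hDdef
  have hD : 0 < D := by
    obtain ⟨a, ha, b, hb, hab⟩ := hGnt
    calc (0:ℝ) < dist a b := dist_pos.mpr hab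
      _ ≤ D := Metric.dist_le_diam_of_mem hGb ha hb
  set δ := D / A with hδdef
  have hδ : 0 < δ := div_pos hD hA0
  have hδD : δ ≤ D := by
    rw [hδdef]; exact div_le_self hD.le hA
  set ρ : ℕ → ℝ := fun n => δ / 4 * (1 / 2) ^ n with hρdef
  have hρpos : ∀ n, 0 < ρ n := fun n => by positivity
  have hρsucc : ∀ n, ρ (n + 1) = ρ n / 2 := by
    intro n; simp only [hρdef, pow_succ]; ring
  have hρ0 : ρ 0 = δ / 4 := by simp [hρdef]
  set T : ℕ → Set X := Tseq E G ρ with hTdef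
  have hTsucc : ∀ n, T (n + 1) = T n ∪ (E ∩ {x | Metric.infDist x (T n) < ρ n}) :=
    fun n => rfl
  have hT0 : T 0 = G := rfl
  have hTE : ∀ n, T n ⊆ E := by
    intro n; induction n with
    | zero => exact hGE
    | succ n ih => rw [hTsucc]; exact union_subset ih inter_subset_left
  have hTmono : Monotone T :=
    monotone_nat_of_le_succ fun n => by rw [hTsucc]; exact subset_union_left
  have hTne : ∀ n, (T n).Nonempty := fun n =>
    hGnt.nonempty.mono (hT0 ▸ hTmono (Nat.zero_le n))
  have absorb : ∀ n, ∀ w ∈ T n, E ∩ ball w (ρ n) ⊆ T (n + 1) := by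
    intro n w hw y hy
    rw [hTsucc]
    refine Or.inr ⟨hy.1, ?_⟩
    exact lt_of_le_of_lt (Metric.infDist_le_dist_of_mem hw) (mem_ball.mp hy.2)
  -- cascade estimate
  have cascade : ∀ n m, ∀ u ∈ T (n + m), ∃ w ∈ T n,
      dist u w + 2 * ρ (n + m) ≤ 2 * ρ n := by
    intro n m
    induction m with
    | zero => exact fun u hu => ⟨u, hu, by simp⟩
    | succ m ih =>
      intro u hu
      rw [show n + (m + 1) = (n + m) + 1 from rfl, hTsucc] at hu
      rcases hu with hu | ⟨_, hud⟩
      · obtain ⟨w, hw, hwd⟩ := ih u hu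
        refine ⟨w, hw, ?_⟩
        have h1 := hρsucc (n + m)
        have h2 := hρpos (n + m)
        rw [show n + (m + 1) = (n + m) + 1 from rfl, h1]
        linarith
      · obtain ⟨v, hv, hvd⟩ := (Metric.infDist_lt_iff (hTne (n + m))).mp hud
        obtain ⟨w, hw, hwd⟩ := ih v hv
        refine ⟨w, hw, ?_⟩
        have h1 := hρsucc (n + m)
        have h3 := dist_triangle u v w
        rw [show n + (m + 1) = (n + m) + 1 from rfl, h1]
        linarith
  -- distance to G of points of the union
  have hUdist : ∀ u ∈ ⋃ n, T n, Metric.infDist u G ≤ δ / 2 := by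
    intro u hu
    obtain ⟨m, hum⟩ := mem_iUnion.mp hu
    obtain ⟨w, hw, hwd⟩ := cascade 0 m u (by simpa using hum)
    have h2 := hρpos (0 + m)
    calc Metric.infDist u G ≤ dist u w := Metric.infDist_le_dist_of_mem (hT0 ▸ hw)
      _ ≤ 2 * ρ 0 := by linarith
      _ = δ / 2 := by rw [hρ0]; ring
  set G' : Set X := closure (⋃ n, T n) with hG'def
  have hG'E : G' ⊆ E := closure_minimal (iUnion_subset hTE) hEcl
  have hGG' : G ⊆ G' := (hT0 ▸ (subset_iUnion T 0 : T 0 ⊆ _)).trans subset_closure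
  have hG'dist : ∀ x ∈ G', Metric.infDist x G ≤ δ / 2 := by
    have hcl : IsClosed {x : X | Metric.infDist x G ≤ δ / 2} :=
      isClosed_le (continuous_infDist_pt G) continuous_const
    intro x hx
    exact closure_minimal hUdist hcl hx
  -- diameter bound
  have hdist2D : ∀ x ∈ G', ∀ y ∈ G', dist x y ≤ 2 * D := by
    intro x hx y hy
    by_contra hcon
    push_neg at hcon
    set ε := (dist x y - 2 * D) / 3 with hεdef
    have hε : 0 < ε := by rw [hεdef]; linarith
    have hxG : Metric.infDist x G < δ / 2 + ε := lt_of_le_of_lt (hG'dist x hx) (by linarith)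
    have hyG : Metric.infDist y G < δ / 2 + ε := lt_of_le_of_lt (hG'dist y hy) (by linarith)
    obtain ⟨gx, hgx, hgxd⟩ := (Metric.infDist_lt_iff hGnt.nonempty).mp hxG
    obtain ⟨gy, hgy, hgyd⟩ := (Metric.infDist_lt_iff hGnt.nonempty).mp hyG
    have hgg : dist gx gy ≤ D := Metric.dist_le_diam_of_mem hGb hgx hgy
    have := dist_triangle4 x gx gy y
    rw [dist_comm gy y] at this
    have : dist x y ≤ 2 * D + 2 * ε := by
      have hδ2 : δ / 2 + δ / 2 ≤ D := by linarith
      linarith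
    rw [hεdef] at this
    linarith
  have hG'diam : EMetric.diam G' ≤ ENNReal.ofReal (2 * D) := by
    apply EMetric.diam_le
    intro x hx y hy
    rw [edist_dist]
    exact ENNReal.ofReal_le_ofReal (hdist2D x hx y hy)
  -- the three conclusions
  refine ⟨G', hGG', ?_, ?_⟩
  · intro x hx
    refine ⟨hG'E hx, ?_⟩
    calc Metric.infDist x G ≤ δ / 2 := hG'dist x hx
      _ < 3 * D / A := by
          have h : D / A / 2 < 3 * D / A := by
            rw [div_div, div_lt_div_iff₀ (by positivity) hA0]
            nlinarith [mul_pos hD hA0]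
          exact h
  refine ⟨isClosed_closure, hGnt.mono hGG', by
    calc (1:ℝ) < 2 := one_lt_two
      _ = 2 * 1 := (mul_one 2).symm
      _ ≤ C' := mul_le_mul (le_max_right _ _) h8Ak zero_le_one
          (le_trans zero_le_two (le_max_right _ _)), ?_⟩
  intro x hx r hr hrdiam
  have hxE : x ∈ E := hG'E hx
  have hrE : ENNReal.ofReal r < EMetric.diam E :=
    lt_of_lt_of_le hrdiam (EMetric.diam_mono hG'E)
  have hrk : (0:ℝ) ≤ r ^ k := Real.rpow_nonneg hr.le k
  constructor
  · -- lower bound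
    have hr2D : r < 2 * D := by
      have := lt_of_lt_of_le hrdiam hG'diam
      rwa [ENNReal.ofReal_lt_ofReal_iff_of_nonneg hr.le] at this
    -- choose the scale n
    have hex : ∃ n : ℕ, 4 * ρ n ≤ r := by
      obtain ⟨n, hn⟩ := exists_pow_lt_of_lt_one (show (0:ℝ) < r / δ from div_pos hr hδ)
        (show (1:ℝ)/2 < 1 by norm_num)
      refine ⟨n, ?_⟩
      have : (1/2:ℝ) ^ n * δ < r := by
        rw [← lt_div_iff₀ hδ] at *; exact hn
      simp only [hρdef]
      linarith
    set n := Nat.find hex with hndef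
    have hn4 : 4 * ρ n ≤ r := Nat.find_spec hex
    have hρlb : r / (8 * A) ≤ ρ n := by
      rcases Nat.eq_zero_or_pos n with h0 | hpos
      · rw [h0, hρ0]
        have h : r / (8 * A) ≤ D / A / 4 := by
          rw [div_div, div_le_div_iff₀ (by positivity) (by positivity)]
          nlinarith [mul_lt_mul_of_pos_right hr2D hA0]
        exact h
      · obtain ⟨m, hm⟩ := Nat.exists_eq_succ_of_ne_zero hpos.ne'
        have hmin : ¬ 4 * ρ m ≤ r := Nat.find_min hex (by omega)
        push_neg at hmin
        have : ρ n = ρ m / 2 := by rw [hm]; exact hρsucc m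
        have h8 : r / (8 * A) ≤ r / 8 := by
          apply div_le_div_of_nonneg_left hr.le (by norm_num)
          linarith
        linarith
    have hρn := hρpos n
    -- find a deep point w
    obtain ⟨u, hu, hxu⟩ := Metric.mem_closure_iff.mp hx (ρ n) hρn
    obtain ⟨m, hum⟩ := mem_iUnion.mp hu
    obtain ⟨w, hwT, hwd⟩ : ∃ w ∈ T n, dist u w ≤ 2 * ρ n := by
      rcases le_total m n with h | h
      · exact ⟨u, hTmono h hum, by simp [dist_self]; positivity⟩
      · obtain ⟨m', rfl⟩ := Nat.exists_eq_add_of_le h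
        obtain ⟨w, hw, hwd⟩ := cascade n m' u hum
        exact ⟨w, hw, by have := hρpos (n + m'); linarith⟩
    have hwE : w ∈ E := hTE n hwT
    have hsub : E ∩ ball w (ρ n) ⊆ G' ∩ ball x r := by
      rintro y ⟨hyE, hyb⟩
      refine ⟨subset_closure (mem_iUnion.mpr ⟨n + 1, absorb n w hwT ⟨hyE, hyb⟩⟩), ?_⟩
      rw [mem_ball] at hyb ⊢
      have h1 := dist_triangle y w x
      have h2 := dist_triangle w u x
      have h4 : dist w u = dist u w := dist_comm w u
      have h5 : dist u x = dist x u := dist_comm u x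
      linarith
    have hρnE : ENNReal.ofReal (ρ n) < EMetric.diam E :=
      lt_of_le_of_lt (ENNReal.ofReal_le_ofReal (by linarith)) hrE
    have hmeas := (hADR w hwE (ρ n) hρn hρnE).1
    calc ENNReal.ofReal (C'⁻¹ * r ^ k)
        ≤ ENNReal.ofReal (C_E⁻¹ * ρ n ^ k) := by
          apply ENNReal.ofReal_le_ofReal
          have hineq : C'⁻¹ * r ^ k = C_E⁻¹ * (r / (8 * A)) ^ k *
              (C_E / max C_E 2) := by
            rw [Real.div_rpow hr.le (by linarith), hC'def, mul_inv]
            field_simp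
          rw [hineq]
          have h1 : C_E / max C_E 2 ≤ 1 :=
            div_le_one_of_le₀ (le_max_left _ _) (by positivity)
          have h2 : (r / (8 * A)) ^ k ≤ ρ n ^ k :=
            Real.rpow_le_rpow (by positivity) hρlb hk.le
          have h3 : (0:ℝ) ≤ C_E⁻¹ * (r / (8 * A)) ^ k := by positivity
          calc C_E⁻¹ * (r / (8 * A)) ^ k * (C_E / max C_E 2)
              ≤ C_E⁻¹ * (r / (8 * A)) ^ k * 1 :=
                mul_le_mul_of_nonneg_left h1 h3
            _ = C_E⁻¹ * (r / (8 * A)) ^ k := mul_one _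
            _ ≤ C_E⁻¹ * ρ n ^ k :=
                mul_le_mul_of_nonneg_left h2 (by positivity)
      _ ≤ μH[k] (E ∩ ball w (ρ n)) := hmeas
      _ ≤ μH[k] (G' ∩ ball x r) := measure_mono hsub
  · -- upper bound
    have hupper := (hADR x hxE r hr hrE).2
    calc μH[k] (G' ∩ ball x r) ≤ μH[k] (E ∩ ball x r) :=
          measure_mono (inter_subset_inter_left _ hG'E)
      _ ≤ ENNReal.ofReal (C_E * r ^ k) := hupper
      _ ≤ ENNReal.ofReal (C' * r ^ k) := by
          apply ENNReal.ofReal_le_ofReal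
          apply mul_le_mul_of_nonneg_right _ hrk
          calc C_E ≤ max C_E 2 := le_max_left _ _
            _ = max C_E 2 * 1 := (mul_one _).symm
            _ ≤ C' := mul_le_mul_of_nonneg_left h8Ak (by positivity)
end

section
/- Let X be a metric space, k > 0, and let E ⊆ X be a k-Ahlfors–David regular set with constant C. Let G̃ ⊆ E and suppose there exists a constant c ∈ (0,1) such that for every x ∈ G̃ and every R with 0 < R < diam G̃ there exists y ∈ E with B(y, cR) ∩ E ⊆ B(x, R) ∩ G̃. Then G̃ is k-Ahlfors–David regular; specifically, for every x ∈ G̃ and 0 < R < diam G̃ one has c^k R^k / C ≤ 𝓗^k(B(x,R) ∩ G̃) ≤ C R^k. -/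
open Metric MeasureTheory Set

variable {X : Type*} [MetricSpace X] [MeasurableSpace X] [BorelSpace X]

/-- If `G' ⊆ E` with `E` `k`-Ahlfors–David regular with constant `C`, and every ball
`B(x,R)` centered on `G'` with `0 < R < diam G'` contains a set `B(y,cR) ∩ E` inside
`B(x,R) ∩ G'`, then `c^k R^k / C ≤ 𝓗^k(B(x,R) ∩ G') ≤ C R^k` for all such `x, R`. -/
theorem adr_of_inner_balls {X : Type*} [MetricSpace X] [MeasurableSpace X] [BorelSpace X]
    (k C c : ℝ) (hk : 0 < k) (E G' : Set X)
    (hE : ADR k C E) (hsub : G' ⊆ E) (hc : c ∈ Set.Ioo (0 : ℝ) 1)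
    (hcover : ∀ x ∈ G', ∀ R : ℝ, 0 < R → ENNReal.ofReal R < EMetric.diam G' →
      ∃ y ∈ E, ball y (c * R) ∩ E ⊆ ball x R ∩ G') :
    ∀ x ∈ G', ∀ R : ℝ, 0 < R → ENNReal.ofReal R < EMetric.diam G' →
      ENNReal.ofReal (c ^ k * R ^ k / C) ≤ μH[k] (ball x R ∩ G') ∧
        μH[k] (ball x R ∩ G') ≤ ENNReal.ofReal (C * R ^ k) := by
  intro x hx R hR hRd
  obtain ⟨hclosed, hnt, hC, hADR⟩ := hE
  have hdiam : EMetric.diam G' ≤ EMetric.diam E := EMetric.diam_mono hsub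
  have hRE : ENNReal.ofReal R < EMetric.diam E := lt_of_lt_of_le hRd hdiam
  constructor
  · obtain ⟨y, hy, hball⟩ := hcover x hx R hR hRd
    have hcR : 0 < c * R := mul_pos hc.1 hR
    have hcRE : ENNReal.ofReal (c * R) < EMetric.diam E := by
      refine lt_of_lt_of_le ?_ (le_of_lt hRE)
      exact ENNReal.ofReal_lt_ofReal_iff hR |>.2 (by nlinarith [hc.2])
    have hlow := (hADR y hy (c * R) hcR hcRE).1
    have heq : C⁻¹ * (c * R) ^ k = c ^ k * R ^ k / C := by
      rw [Real.mul_rpow hc.1.le hR.le]; field_simp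
    rw [heq] at hlow
    refine le_trans hlow (le_trans (le_of_eq ?_) (measure_mono hball))
    rw [inter_comm]
  · have := (hADR x (hsub hx) R hR hRE).2
    refine le_trans (measure_mono ?_) this
    intro z hz; exact ⟨hsub hz.2, hz.1⟩
end

section
/- Let X be a metric space, k > 0, C > 1, θ > 0, and let 𝓕 be a class of closed k-Ahlfors–David regular subsets of X. There exists A₀ ≥ 1, depending only on C, k, and θ, such that for every A ≥ A₀ the following holds. Let x₀ ∈ X and let (F̃_n)_{n≥0} be sets in X such that each F̃_n is k-Ahlfors–David regular with constant C and F̃_n ∈ BP(𝓕) with constant θ, F̃_n ⊆ B(x₀, 2A^n) for all n, diam F̃_n ≥ A^{n-1} for all n, and F̃_n ∩ B(x₀, A^{n-1}/4) = ∅ for all n ≥ 1. If the union F = ⋃_{n≥0} F̃_n is k-Ahlfors–David regular with constant C_F, then F ∈ BP(𝓕) with a constant depending only on C, C_F, θ, A, and k. -/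
open Metric MeasureTheory Set

open scoped ENNReal

variable {X : Type*} [MetricSpace X] [MeasurableSpace X] [BorelSpace X]

set_option maxHeartbeats 1000000 in
/-- **Big pieces for the union in the infinite-diameter case.** There is `A₀ ≥ 1`
depending only on `C`, `k`, `θ` so that for all `A ≥ A₀` and any regularity constant
`C_F` there is `θ' > 0` (depending only on `C`, `C_F`, `θ`, `A`, `k`) with: if each
`F' n` is `k`-Ahlfors–David regular with constant `C`, lies in `BP(𝓕)` with constant
`θ`, `F' n ⊆ B(x₀, 2Aⁿ)`, `diam (F' n) ≥ A^(n-1)`, `F' n ∩ B(x₀, A^(n-1)/4) = ∅` for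
`n ≥ 1`, and `F = ⋃ₙ F' n` is `k`-Ahlfors–David regular with constant `C_F`, then
`F ∈ BP(𝓕)` with constant `θ'`. -/
theorem bp_union (k C θ : ℝ) (hk : 0 < k) (hC : 1 < C) (hθ : 0 < θ) :
    ∃ A₀ : ℝ, 1 ≤ A₀ ∧
      ∀ A : ℝ, A₀ ≤ A → ∀ C_F : ℝ,
        ∃ θ' : ℝ, 0 < θ' ∧
          ∀ (X : Type*) [MetricSpace X] [MeasurableSpace X] [BorelSpace X]
            (𝓕 : Set (Set X)) (x₀ : X) (F' : ℕ → Set X),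
            (∀ H ∈ 𝓕, ∃ C'' : ℝ, ADR k C'' H) →
            (∀ n : ℕ, ADR k C (F' n)) →
            (∀ n : ℕ, BigPieces k θ 𝓕 (F' n)) →
            (∀ n : ℕ, F' n ⊆ ball x₀ (2 * A ^ n)) →
            (∀ n : ℕ, A ^ ((n : ℤ) - 1) ≤ Metric.diam (F' n)) →
            (∀ n : ℕ, 1 ≤ n → F' n ∩ ball x₀ (A ^ ((n : ℤ) - 1) / 4) = ∅) →
            ADR k C_F (⋃ n, F' n) →
            BigPieces k θ' 𝓕 (⋃ n, F' n) := by
  classical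
  refine ⟨max 2 ((2:ℝ) ^ (1/k)), le_trans (by norm_num) (le_max_left _ _), ?_⟩
  intro A hA C_F
  have hA2 : (2:ℝ) ≤ A := le_trans (le_max_left _ _) hA
  have hA1 : (1:ℝ) < A := by linarith
  have hA0 : (0:ℝ) < A := by linarith
  have hknz : k ≠ 0 := ne_of_gt hk
  have hAk2 : (2:ℝ) ≤ A ^ k := by
    have h1 : ((2:ℝ) ^ (1/k)) ^ k ≤ A ^ k :=
      Real.rpow_le_rpow (Real.rpow_nonneg (by norm_num) _)
        (le_trans (le_max_right _ _) hA) hk.le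
    have h2 : ((2:ℝ) ^ (1/k)) ^ k = 2 := by
      rw [← Real.rpow_mul (by norm_num : (0:ℝ) ≤ 2), one_div_mul_cancel hknz, Real.rpow_one]
    linarith
  set B : ℝ := max C_F 2 with hBdef
  have hB2 : (2:ℝ) ≤ B := le_max_right _ _
  have hB0 : (0:ℝ) < B := by linarith
  have hB2pos : (0:ℝ) < B ^ 2 := pow_pos hB0 2
  have h4B2 : (0:ℝ) < 4 * B ^ 2 := by linarith
  have h4k : (0:ℝ) < (4:ℝ) ^ k := Real.rpow_pos_of_pos (by norm_num) k
  have h8k : (0:ℝ) < (8:ℝ) ^ k := Real.rpow_pos_of_pos (by norm_num) k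
  have h32k : (0:ℝ) < (32:ℝ) ^ k := Real.rpow_pos_of_pos (by norm_num) k
  set ε : ℝ := (4 * B ^ 2) ^ (-(1/k)) / 32 with hεdef
  have hε0 : (0:ℝ) < ε := by
    rw [hεdef]
    exact div_pos (Real.rpow_pos_of_pos h4B2 _) (by norm_num)
  have hεk : ε ^ k = (4 * B ^ 2)⁻¹ / 32 ^ k := by
    rw [hεdef, Real.div_rpow (Real.rpow_nonneg h4B2.le _) (by norm_num : (0:ℝ) ≤ 32)]
    congr 1
    rw [← Real.rpow_mul h4B2.le]
    rw [show -(1/k) * k = -1 by field_simp]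
    exact Real.rpow_neg_one _
  set ρ : ℝ := max (5 * A / ε) (14 * A) with hρdef
  have hρ0 : (0:ℝ) < ρ := lt_of_lt_of_le (by linarith) (le_max_right _ _)
  set N : ℕ := ⌈Real.log ρ / Real.log A⌉₊ with hNdef
  have hAN : ρ ≤ A ^ N := by
    have hlogA : 0 < Real.log A := Real.log_pos hA1
    have h1 : Real.log ρ / Real.log A ≤ (N : ℝ) := Nat.le_ceil _
    have h2 : Real.log ρ ≤ (N : ℝ) * Real.log A := by
      rw [div_le_iff₀ hlogA] at h1; linarith
    calc ρ = Real.exp (Real.log ρ) := (Real.exp_log hρ0).symm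
      _ ≤ Real.exp ((N:ℝ) * Real.log A) := Real.exp_le_exp.2 h2
      _ = A ^ N := by rw [Real.exp_nat_mul, Real.exp_log hA0]
  have hN1 : (0:ℝ) < (N:ℝ) + 1 := by positivity
  have hden : (0:ℝ) < 4 * ((N:ℝ) + 1) * B ^ 2 * 4 ^ k :=
    mul_pos (mul_pos (mul_pos (by norm_num) hN1) hB2pos) h4k
  refine ⟨θ / (4 * ((N:ℝ) + 1) * B ^ 2 * 4 ^ k), div_pos hθ hden, ?_⟩
  intro X _ _ _ 𝓕 x₀ F' _h𝓕 _hADR hBP hsub hdiam' hsep hF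
  obtain ⟨hFcl, hFnt, hCF1, hFreg⟩ := hF
  have hBCF : C_F ≤ B := le_max_left _ _
  have hCF0 : (0:ℝ) < C_F := by linarith
  have hBinv : B⁻¹ ≤ C_F⁻¹ := by
    apply inv_anti₀ hCF0 hBCF
  -- the union has unbounded diameter
  have hediam : ∀ r : ℝ, ENNReal.ofReal r < EMetric.diam (⋃ n, F' n) := by
    intro r
    obtain ⟨n, hn⟩ := pow_unbounded_of_one_lt (max r 1) hA1
    have hnr : r < A ^ n := lt_of_le_of_lt (le_max_left _ _) hn
    have hbd : EMetric.diam (F' (n+1)) ≠ ⊤ :=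
      (Metric.isBounded_ball.subset (hsub (n+1))).ediam_ne_top
    have hd := hdiam' (n+1)
    have hcast : ((n+1 : ℕ) : ℤ) - 1 = (n : ℤ) := by push_cast; ring
    rw [hcast, zpow_natCast] at hd
    have h1 : ENNReal.ofReal r < ENNReal.ofReal (A ^ n) := by
      rw [ENNReal.ofReal_lt_ofReal_iff (by positivity)]; exact hnr
    refine h1.trans_le ?_
    calc ENNReal.ofReal (A ^ n) ≤ ENNReal.ofReal (Metric.diam (F' (n+1))) :=
        ENNReal.ofReal_le_ofReal hd
      _ = EMetric.diam (F' (n+1)) := ENNReal.ofReal_toReal hbd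
      _ ≤ EMetric.diam (⋃ n, F' n) := EMetric.diam_mono (subset_iUnion F' (n+1))
  unfold BigPieces
  intro x hx R hR
  have hR4 : (0:ℝ) < R / 4 := by linarith
  have hεR : (0:ℝ) < ε * R := mul_pos hε0 hR
  have hR4kpos : (0:ℝ) < (R/4) ^ k := Real.rpow_pos_of_pos hR4 k
  have hRk : (0:ℝ) < R ^ k := Real.rpow_pos_of_pos hR k
  have hR4k : (R/4) ^ k = R ^ k / 4 ^ k := Real.div_rpow hR.le (by norm_num : (0:ℝ) ≤ 4) k
  have hBi : (0:ℝ) < B⁻¹ := inv_pos.2 hB0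
  have hhalfpos : (0:ℝ) < B⁻¹ * (R/4) ^ k / 2 :=
    div_pos (mul_pos hBi hR4kpos) (by norm_num)
  set D : ℝ := dist x x₀ with hDdef
  have hD0 : (0:ℝ) ≤ D := dist_nonneg
  set f : ℕ → ℝ≥0∞ := fun m => μH[k] (F' m ∩ ball x (R/4)) with hfdef
  -- lower bound for the total mass
  have hLfull : ENNReal.ofReal (B⁻¹ * (R/4) ^ k) ≤ ∑' m, f m := by
    have h1 := (hFreg x hx (R/4) hR4 (hediam _)).1
    have h2 : μH[k] ((⋃ n, F' n) ∩ ball x (R/4)) ≤ ∑' m, f m := by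
      rw [iUnion_inter]
      exact measure_iUnion_le _
    exact le_trans (ENNReal.ofReal_le_ofReal
      (mul_le_mul_of_nonneg_right hBinv hR4kpos.le)) (le_trans h1 h2)
  -- annulus constraints for pieces meeting the ball
  have hannulus : ∀ m : ℕ, 1 ≤ m → f m ≠ 0 →
      A ^ m ≤ 4 * A * (D + R/4) ∧ D - R/4 < 2 * A ^ m := by
    intro m hm hf0
    have hne : (F' m ∩ ball x (R/4)).Nonempty := by
      rw [nonempty_iff_ne_empty]
      intro h
      refine hf0 ?_
      show μH[k] (F' m ∩ ball x (R/4)) = 0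
      rw [h]; exact measure_empty
    obtain ⟨w, hwF, hwb⟩ := hne
    have hw1 : dist w x₀ < 2 * A ^ m := mem_ball.1 (hsub m hwF)
    have hw2 : A ^ ((m:ℤ) - 1) / 4 ≤ dist w x₀ := by
      by_contra hcon
      push_neg at hcon
      have hww : w ∈ F' m ∩ ball x₀ (A ^ ((m:ℤ)-1) / 4) := ⟨hwF, mem_ball.2 hcon⟩
      rw [hsep m hm] at hww
      exact hww
    have hz : (A:ℝ) ^ ((m:ℤ) - 1) = A ^ m / A := by
      rw [zpow_sub₀ (ne_of_gt hA0), zpow_one, zpow_natCast]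
    rw [hz] at hw2
    have hwx : dist w x < R/4 := mem_ball.1 hwb
    have ht1 : dist w x₀ ≤ D + R/4 := by
      have h3 := dist_triangle w x x₀
      rw [hDdef] at *
      linarith
    have ht2 : D - R/4 < dist w x₀ := by
      have h3 := dist_triangle x w x₀
      have h4 : dist x w = dist w x := dist_comm x w
      linarith
    constructor
    · have h5 : A ^ m / A / 4 ≤ D + R/4 := le_trans hw2 ht1
      rw [div_div, div_le_iff₀ (by positivity)] at h5
      calc (A:ℝ) ^ m ≤ (D + R/4) * (A * 4) := h5
        _ = 4 * A * (D + R/4) := by ring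
    · linarith
  -- bounds for "large" pieces meeting the ball
  have hbnd : ∃ a : ℝ, 0 < a ∧ ∀ m : ℕ, 1 ≤ m → ¬(A ^ m ≤ ε * R) → f m ≠ 0 →
      a < A ^ m ∧ A ^ m ≤ ρ * a := by
    rcases le_or_gt D R with hDR | hDR
    · refine ⟨ε * R, hεR, fun m hm hsm hf0 => ?_⟩
      obtain ⟨hup, _⟩ := hannulus m hm hf0
      refine ⟨lt_of_not_ge hsm, ?_⟩
      have h1 : 4 * A * (D + R/4) ≤ 4 * A * (R + R/4) :=
        mul_le_mul_of_nonneg_left (by linarith) (by linarith)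
      have h1' : 4 * A * (R + R/4) = 5 * A * R := by ring
      have h2 : (5 * A / ε) * (ε * R) = 5 * A * R := by
        field_simp
      have h3 : (5 * A / ε) * (ε * R) ≤ ρ * (ε * R) :=
        mul_le_mul_of_nonneg_right (le_max_left _ _) hεR.le
      linarith
    · refine ⟨3 * D / 8, by linarith, fun m hm hsm hf0 => ?_⟩
      obtain ⟨hup, hlo⟩ := hannulus m hm hf0
      have hAD : (0:ℝ) ≤ A * D := mul_nonneg hA0.le hD0
      constructor
      · linarith
      · have h1 : 4 * A * (D + R/4) ≤ 4 * A * (D + D/4) :=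
          mul_le_mul_of_nonneg_left (by linarith) (by linarith)
        have h1' : 4 * A * (D + D/4) = 5 * (A * D) := by ring
        have h2 : 14 * A * (3 * D / 8) ≤ ρ * (3 * D / 8) :=
          mul_le_mul_of_nonneg_right (le_max_right _ _) (by linarith)
        have h2' : 14 * A * (3 * D / 8) = (21/4) * (A * D) := by ring
        linarith
  -- small pieces contribute at most half
  have hterm : ∀ m : ℕ, (if A ^ m ≤ ε * R then f m else 0) ≤
      ENNReal.ofReal (B * 8 ^ k) *
        (if A ^ m ≤ ε * R then ENNReal.ofReal ((A ^ m) ^ k) else 0) := by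
    intro m
    split_ifs with hm
    · rcases eq_or_ne (f m) 0 with h0 | h0
      · rw [h0]; exact zero_le
      · have hne : (F' m ∩ ball x (R/4)).Nonempty := by
          rw [nonempty_iff_ne_empty]
          intro h
          refine h0 ?_
          show μH[k] (F' m ∩ ball x (R/4)) = 0
          rw [h]; exact measure_empty
        obtain ⟨w, hwF, _⟩ := hne
        have hwU : w ∈ ⋃ n, F' n := mem_iUnion.2 ⟨m, hwF⟩
        have hAm0 : (0:ℝ) < A ^ m := pow_pos hA0 m
        have hsubm : F' m ∩ ball x (R/4) ⊆ (⋃ n, F' n) ∩ ball w (8 * A ^ m) := by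
          rintro v ⟨hv1, _⟩
          refine ⟨mem_iUnion.2 ⟨m, hv1⟩, mem_ball.2 ?_⟩
          have h1 : dist v x₀ < 2 * A ^ m := mem_ball.1 (hsub m hv1)
          have h2 : dist w x₀ < 2 * A ^ m := mem_ball.1 (hsub m hwF)
          have h3 := dist_triangle v x₀ w
          have h4 : dist x₀ w = dist w x₀ := dist_comm _ _
          linarith
        have hup := (hFreg w hwU (8 * A ^ m) (by positivity) (hediam _)).2
        have hle : μH[k] (F' m ∩ ball x (R/4)) ≤ ENNReal.ofReal (C_F * (8 * A ^ m) ^ k) :=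
          le_trans (measure_mono hsubm) hup
        have hAmk : (0:ℝ) < (A ^ m) ^ k := Real.rpow_pos_of_pos hAm0 k
        have hre : C_F * (8 * A ^ m) ^ k ≤ B * 8 ^ k * (A ^ m) ^ k := by
          rw [Real.mul_rpow (by norm_num) hAm0.le]
          have hq : C_F * (8 ^ k * (A ^ m) ^ k) ≤ B * (8 ^ k * (A ^ m) ^ k) :=
            mul_le_mul_of_nonneg_right hBCF (mul_nonneg h8k.le hAmk.le)
          nlinarith [hq]
        calc f m ≤ ENNReal.ofReal (C_F * (8 * A ^ m) ^ k) := hle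
          _ ≤ ENNReal.ofReal (B * 8 ^ k * (A ^ m) ^ k) := ENNReal.ofReal_le_ofReal hre
          _ = ENNReal.ofReal (B * 8 ^ k) * ENNReal.ofReal ((A ^ m) ^ k) := by
              rw [← ENNReal.ofReal_mul (mul_nonneg hB0.le h8k.le)]
    · simp
  have hgeo : (∑' m : ℕ, if A ^ m ≤ ε * R then ENNReal.ofReal ((A ^ m) ^ k) else 0) ≤
      ENNReal.ofReal (2 * (ε * R) ^ k) := by
    have hout : ∀ m : ℕ, m ∉ Finset.range ⌈ε * R⌉₊ →
        (if A ^ m ≤ ε * R then ENNReal.ofReal ((A ^ m) ^ k) else 0) = 0 := by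
      intro m hm
      rw [Finset.mem_range, not_lt] at hm
      have h2m : (m:ℝ) < 2 ^ m := by exact_mod_cast Nat.lt_two_pow_self
      have hcm : ε * R ≤ (m:ℝ) := le_trans (Nat.le_ceil _) (by exact_mod_cast hm)
      have hA2m : (2:ℝ) ^ m ≤ A ^ m := pow_le_pow_left₀ (by norm_num) hA2 m
      have hlt : ε * R < A ^ m := by linarith
      rw [if_neg (not_le.2 hlt)]
    rw [tsum_eq_sum hout, ← Finset.sum_filter]
    set T := Finset.filter (fun m => A ^ m ≤ ε * R) (Finset.range ⌈ε * R⌉₊) with hTdef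
    rcases Finset.eq_empty_or_nonempty T with hTe | hTne
    · rw [hTe, Finset.sum_empty]; exact zero_le
    · rw [← ENNReal.ofReal_sum_of_nonneg
        (fun i _ => Real.rpow_nonneg (pow_pos hA0 i).le k)]
      apply ENNReal.ofReal_le_ofReal
      set M := T.max' hTne with hMdef
      have hMT : M ∈ T := T.max'_mem hTne
      have hMεR : A ^ M ≤ ε * R := (Finset.mem_filter.1 hMT).2
      have hTsub : T ⊆ Finset.range (M + 1) := by
        intro m hm
        rw [Finset.mem_range, Nat.lt_succ_iff]
        exact Finset.le_max' T m hm
      have hPm : ∀ m : ℕ, ((A:ℝ) ^ m) ^ k = (A ^ k) ^ m := by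
        intro m
        rw [← Real.rpow_natCast A m, ← Real.rpow_natCast (A ^ k) m,
          ← Real.rpow_mul hA0.le, ← Real.rpow_mul hA0.le, mul_comm]
      have hP1 : (A:ℝ) ^ k ≠ 1 := by linarith
      calc ∑ m ∈ T, ((A:ℝ) ^ m) ^ k
          ≤ ∑ m ∈ Finset.range (M+1), ((A:ℝ) ^ m) ^ k :=
            Finset.sum_le_sum_of_subset_of_nonneg hTsub
              (fun i _ _ => Real.rpow_nonneg (pow_pos hA0 i).le k)
        _ = ∑ m ∈ Finset.range (M+1), ((A:ℝ) ^ k) ^ m :=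
            Finset.sum_congr rfl (fun m _ => hPm m)
        _ = (((A:ℝ) ^ k) ^ (M+1) - 1) / ((A:ℝ) ^ k - 1) := geom_sum_eq hP1 (M+1)
        _ ≤ 2 * ((A:ℝ) ^ k) ^ M := by
            have hPM : (0:ℝ) < (A ^ k) ^ M := pow_pos (by linarith) M
            rw [div_le_iff₀ (by linarith)]
            have hsucc : ((A:ℝ) ^ k) ^ (M+1) = (A ^ k) ^ M * (A ^ k) := pow_succ _ _
            nlinarith [mul_nonneg hPM.le (sub_nonneg.2 hAk2)]
        _ ≤ 2 * (ε * R) ^ k := by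
            have hq : ((A:ℝ) ^ k) ^ M = ((A:ℝ) ^ M) ^ k := (hPm M).symm
            rw [hq]
            have := Real.rpow_le_rpow (pow_pos hA0 M).le hMεR hk.le
            linarith
  have hv : (32:ℝ) ^ k = 8 ^ k * 4 ^ k := by
    rw [← Real.mul_rpow (by norm_num) (by norm_num)]
    norm_num
  have hkey : B * 8 ^ k * (2 * (ε * R) ^ k) ≤ B⁻¹ * (R/4) ^ k / 2 := by
    have hmulε : (ε * R) ^ k = ε ^ k * R ^ k := Real.mul_rpow hε0.le hR.le
    rw [hmulε, hεk, hR4k, hv]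
    have heq : B * 8 ^ k * (2 * ((4 * B ^ 2)⁻¹ / (8 ^ k * 4 ^ k) * R ^ k)) =
        B⁻¹ * (R ^ k / 4 ^ k) / 2 := by
      field_simp
      ring
    exact le_of_eq heq
  have hsmall : (∑' m, if A ^ m ≤ ε * R then f m else 0) ≤
      ENNReal.ofReal (B⁻¹ * (R/4) ^ k / 2) :=
    calc (∑' m, if A ^ m ≤ ε * R then f m else 0)
        ≤ ∑' m, ENNReal.ofReal (B * 8 ^ k) *
            (if A ^ m ≤ ε * R then ENNReal.ofReal ((A ^ m) ^ k) else 0) :=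
          ENNReal.tsum_le_tsum hterm
      _ = ENNReal.ofReal (B * 8 ^ k) *
            ∑' m, (if A ^ m ≤ ε * R then ENNReal.ofReal ((A ^ m) ^ k) else 0) :=
          ENNReal.tsum_mul_left
      _ ≤ ENNReal.ofReal (B * 8 ^ k) * ENNReal.ofReal (2 * (ε * R) ^ k) :=
          mul_le_mul_right hgeo _
      _ = ENNReal.ofReal (B * 8 ^ k * (2 * (ε * R) ^ k)) :=
          (ENNReal.ofReal_mul (mul_nonneg hB0.le h8k.le)).symm
      _ ≤ ENNReal.ofReal (B⁻¹ * (R/4) ^ k / 2) := ENNReal.ofReal_le_ofReal hkey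
  have hsplit : ∑' m, f m = (∑' m, if A ^ m ≤ ε * R then f m else 0) +
      (∑' m, if A ^ m ≤ ε * R then 0 else f m) := by
    rw [← ENNReal.tsum_add]
    exact tsum_congr fun m => by split_ifs <;> simp
  have hlarge : ENNReal.ofReal (B⁻¹ * (R/4) ^ k / 2) ≤
      ∑' m, (if A ^ m ≤ ε * R then 0 else f m) := by
    have hfull : ENNReal.ofReal (B⁻¹ * (R/4) ^ k) =
        ENNReal.ofReal (B⁻¹ * (R/4) ^ k / 2) + ENNReal.ofReal (B⁻¹ * (R/4) ^ k / 2) := by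
      rw [← ENNReal.ofReal_add hhalfpos.le hhalfpos.le]
      congr 1; ring
    have h3 : ENNReal.ofReal (B⁻¹ * (R/4) ^ k / 2) + ENNReal.ofReal (B⁻¹ * (R/4) ^ k / 2) ≤
        ENNReal.ofReal (B⁻¹ * (R/4) ^ k / 2) +
          ∑' m, (if A ^ m ≤ ε * R then 0 else f m) := by
      calc ENNReal.ofReal (B⁻¹ * (R/4) ^ k / 2) + ENNReal.ofReal (B⁻¹ * (R/4) ^ k / 2)
          = ENNReal.ofReal (B⁻¹ * (R/4) ^ k) := hfull.symm
        _ ≤ ∑' m, f m := hLfull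
        _ = (∑' m, if A ^ m ≤ ε * R then f m else 0) +
            (∑' m, if A ^ m ≤ ε * R then 0 else f m) := hsplit
        _ ≤ ENNReal.ofReal (B⁻¹ * (R/4) ^ k / 2) +
            ∑' m, (if A ^ m ≤ ε * R then 0 else f m) := add_le_add_left hsmall _
    exact (ENNReal.add_le_add_iff_left ENNReal.ofReal_ne_top).1 h3
  set g : ℕ → ℝ≥0∞ := fun m => if A ^ m ≤ ε * R then 0 else f m with hgdef
  obtain ⟨a, ha0, hab⟩ := hbnd
  have hJ : ∃ J : Finset ℕ, J.Nonempty ∧ J.card ≤ N + 1 ∧ ∀ m, m ∉ J → g m = 0 := by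
    by_cases hex : ∃ m : ℕ, (1 ≤ m ∧ ¬(A ^ m ≤ ε * R)) ∧ f m ≠ 0
    · obtain ⟨hm₀a, hm₀f⟩ := Nat.find_spec hex
      obtain ⟨hm₀1, hm₀s⟩ := hm₀a
      refine ⟨insert 0 (Finset.Ico (Nat.find hex) (Nat.find hex + N)),
        ⟨0, Finset.mem_insert_self _ _⟩, ?_, ?_⟩
      · calc (insert 0 (Finset.Ico (Nat.find hex) (Nat.find hex + N))).card
            ≤ (Finset.Ico (Nat.find hex) (Nat.find hex + N)).card + 1 :=
              Finset.card_insert_le _ _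
          _ ≤ N + 1 := by rw [Nat.card_Ico]; omega
      · intro m hm
        show (if A ^ m ≤ ε * R then 0 else f m) = 0
        split_ifs with hsm
        · rfl
        · by_contra hf0
          have hm1 : 1 ≤ m := by
            rcases Nat.eq_zero_or_pos m with h0 | h1
            · subst h0
              exact absurd (Finset.mem_insert_self 0 _) hm
            · exact h1
          have hmge : Nat.find hex ≤ m := Nat.find_min' hex ⟨⟨hm1, hsm⟩, hf0⟩
          obtain ⟨ham, hamu⟩ := hab m hm1 hsm hf0
          obtain ⟨ham₀, _⟩ := hab (Nat.find hex) hm₀1 hm₀s hm₀f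
          have hlt : (A:ℝ) ^ m < A ^ (N + Nat.find hex) := by
            calc (A:ℝ) ^ m ≤ ρ * a := hamu
              _ < ρ * A ^ (Nat.find hex) := mul_lt_mul_of_pos_left ham₀ hρ0
              _ ≤ A ^ N * A ^ (Nat.find hex) :=
                  mul_le_mul_of_nonneg_right hAN (pow_pos hA0 _).le
              _ = A ^ (N + Nat.find hex) := (pow_add A N _).symm
          have hmlt : m < N + Nat.find hex := (pow_lt_pow_iff_right₀ hA1).1 hlt
          exact hm (Finset.mem_insert_of_mem (Finset.mem_Ico.2 ⟨hmge, by omega⟩))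
    · refine ⟨{0}, ⟨0, Finset.mem_singleton_self 0⟩, by simp, ?_⟩
      intro m hm
      show (if A ^ m ≤ ε * R then 0 else f m) = 0
      split_ifs with hsm
      · rfl
      · by_contra hf0
        have hm1 : m ≠ 0 := by simpa using hm
        exact hex ⟨m, ⟨Nat.one_le_iff_ne_zero.2 hm1, hsm⟩, hf0⟩
  obtain ⟨J, hJne, hJcard, hJ0⟩ := hJ
  have hsumJ : ENNReal.ofReal (B⁻¹ * (R/4) ^ k / 2) ≤ ∑ m ∈ J, g m := by
    rw [← tsum_eq_sum (L := SummationFilter.unconditional ℕ) hJ0]; exact hlarge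
  have htpos : (0:ℝ) < B⁻¹ * (R/4) ^ k / 2 / (2 * ((N:ℝ) + 1)) :=
    div_pos hhalfpos (by positivity)
  have hpick : ∃ m ∈ J,
      ENNReal.ofReal (B⁻¹ * (R/4) ^ k / 2 / (2 * ((N:ℝ) + 1))) ≤ g m := by
    by_contra hcon
    push_neg at hcon
    have hb : ∀ m ∈ J, g m ≤ ENNReal.ofReal (B⁻¹ * (R/4) ^ k / 2 / (2 * ((N:ℝ) + 1))) :=
      fun m hm => (hcon m hm).le
    have hcast : ((N+1 : ℕ) : ℝ≥0∞) = ENNReal.ofReal ((N:ℝ) + 1) := by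
      rw [← ENNReal.ofReal_natCast (N+1)]
      congr 1
      push_cast
      ring
    have hchain : ENNReal.ofReal (B⁻¹ * (R/4) ^ k / 2) ≤
        ENNReal.ofReal (B⁻¹ * (R/4) ^ k / 2 / 2) := by
      calc ENNReal.ofReal (B⁻¹ * (R/4) ^ k / 2) ≤ ∑ m ∈ J, g m := hsumJ
        _ ≤ ∑ _m ∈ J, ENNReal.ofReal (B⁻¹ * (R/4) ^ k / 2 / (2 * ((N:ℝ) + 1))) :=
            Finset.sum_le_sum hb
        _ = J.card • ENNReal.ofReal (B⁻¹ * (R/4) ^ k / 2 / (2 * ((N:ℝ) + 1))) :=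
            Finset.sum_const _
        _ = (J.card : ℝ≥0∞) * ENNReal.ofReal (B⁻¹ * (R/4) ^ k / 2 / (2 * ((N:ℝ) + 1))) :=
            nsmul_eq_mul _ _
        _ ≤ ((N+1 : ℕ) : ℝ≥0∞) *
              ENNReal.ofReal (B⁻¹ * (R/4) ^ k / 2 / (2 * ((N:ℝ) + 1))) :=
            mul_le_mul_left (Nat.cast_le.2 hJcard) _
        _ = ENNReal.ofReal (((N:ℝ) + 1) * (B⁻¹ * (R/4) ^ k / 2 / (2 * ((N:ℝ) + 1)))) := by
            rw [hcast, ← ENNReal.ofReal_mul (by positivity)]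
        _ = ENNReal.ofReal (B⁻¹ * (R/4) ^ k / 2 / 2) := by
            congr 1
            field_simp
    have hlt2 : ENNReal.ofReal (B⁻¹ * (R/4) ^ k / 2 / 2) <
        ENNReal.ofReal (B⁻¹ * (R/4) ^ k / 2) := by
      rw [ENNReal.ofReal_lt_ofReal_iff hhalfpos]
      linarith
    exact absurd hchain (not_le.2 hlt2)
  obtain ⟨m, hmJ, hmt⟩ := hpick
  have hgm : g m = f m := by
    show (if A ^ m ≤ ε * R then 0 else f m) = f m
    split_ifs with hsm
    · exfalso
      have h0 : g m = 0 := by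
        show (if A ^ m ≤ ε * R then 0 else f m) = 0
        rw [if_pos hsm]
      rw [h0] at hmt
      exact absurd hmt (not_le.2 (ENNReal.ofReal_pos.2 htpos))
    · rfl
  have hfm : ENNReal.ofReal (B⁻¹ * (R/4) ^ k / 2 / (2 * ((N:ℝ) + 1))) ≤ f m :=
    hgm ▸ hmt
  have hne : (F' m ∩ ball x (R/4)).Nonempty := by
    rw [nonempty_iff_ne_empty]
    intro h
    have h0 : f m = 0 := by
      show μH[k] (F' m ∩ ball x (R/4)) = 0
      rw [h]; exact measure_empty
    rw [h0] at hfm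
    exact absurd hfm (not_le.2 (ENNReal.ofReal_pos.2 htpos))
  obtain ⟨y, hyF, hyb⟩ := hne
  obtain ⟨G, hG, hGb⟩ := hBP m y hyF (R/2) (by linarith)
  refine ⟨G, hG, ?_⟩
  have hyx : dist y x < R/4 := mem_ball.1 hyb
  have hball1 : F' m ∩ ball x (R/4) ⊆ ball y (R/2) ∩ F' m := by
    rintro z ⟨hz1, hz2⟩
    refine ⟨mem_ball.2 ?_, hz1⟩
    have hzx := mem_ball.1 hz2
    have h3 := dist_triangle z x y
    have h4 : dist x y = dist y x := dist_comm _ _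
    linarith
  have hball2 : ball y (R/2) ∩ F' m ∩ G ⊆ ball x R ∩ (⋃ n, F' n) ∩ G := by
    rintro z ⟨⟨hz1, hz2⟩, hz3⟩
    refine ⟨⟨mem_ball.2 ?_, mem_iUnion.2 ⟨m, hz2⟩⟩, hz3⟩
    have hzy := mem_ball.1 hz1
    have h3 := dist_triangle z y x
    linarith
  have h6 : μH[k] (ball x R ∩ ⋃ n, F' n) ≤ ENNReal.ofReal (B * R ^ k) := by
    rw [inter_comm]
    refine le_trans (hFreg x hx R hR (hediam _)).2 (ENNReal.ofReal_le_ofReal ?_)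
    exact mul_le_mul_of_nonneg_right hBCF hRk.le
  have hkey2 : θ / (4 * ((N:ℝ) + 1) * B ^ 2 * 4 ^ k) * (B * R ^ k) =
      θ * (B⁻¹ * (R/4) ^ k / 2 / (2 * ((N:ℝ) + 1))) := by
    rw [hR4k]
    field_simp
    ring
  calc ENNReal.ofReal (θ / (4 * ((N:ℝ) + 1) * B ^ 2 * 4 ^ k)) *
        μH[k] (ball x R ∩ ⋃ n, F' n)
      ≤ ENNReal.ofReal (θ / (4 * ((N:ℝ) + 1) * B ^ 2 * 4 ^ k)) *
        ENNReal.ofReal (B * R ^ k) := mul_le_mul_right h6 _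
    _ = ENNReal.ofReal (θ / (4 * ((N:ℝ) + 1) * B ^ 2 * 4 ^ k) * (B * R ^ k)) :=
        (ENNReal.ofReal_mul (div_pos hθ hden).le).symm
    _ = ENNReal.ofReal (θ * (B⁻¹ * (R/4) ^ k / 2 / (2 * ((N:ℝ) + 1)))) := by rw [hkey2]
    _ = ENNReal.ofReal θ * ENNReal.ofReal (B⁻¹ * (R/4) ^ k / 2 / (2 * ((N:ℝ) + 1))) :=
        ENNReal.ofReal_mul hθ.le
    _ ≤ ENNReal.ofReal θ * f m := mul_le_mul_right hfm _
    _ ≤ ENNReal.ofReal θ * μH[k] (ball y (R/2) ∩ F' m) :=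
        mul_le_mul_right (measure_mono hball1) _
    _ ≤ μH[k] (ball y (R/2) ∩ F' m ∩ G) := hGb
    _ ≤ μH[k] (ball x R ∩ (⋃ n, F' n) ∩ G) := measure_mono hball2
end
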